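/- arXiv:math/0404231 — 2 statements merged into one kernel-verified Lean document; each statement's English description precedes it below -/
import Mathlib

section
/- The contraction coefficient is submultiplicative: for any two Markov transition kernels π₁, π₂ on a measurable space X, δ(π₁π₂) ≤ δ(π₁)·δ(π₂), where π₁π₂ denotes the composed kernel (π₁π₂)(x,A) = ∫ π₂(y,A) π₁(x,dy). -/
open MeasureTheory ProbabilityTheory

noncomputable def contractionCoeff {S : Type*} [MeasurableSpace S]
    (π : ProbabilityTheory.Kernel S S) : ℝ :=
  sSup {r : ℝ | ∃ x₁ x₂ : S, ∃ A : Set S, MeasurableSet A ∧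
    r = |(π x₁ A).toReal - (π x₂ A).toReal|}

section Aux

variable {S : Type*} [MeasurableSpace S]

lemma contraction_toReal_le_one (π : Kernel S S) [IsMarkovKernel π] (x : S) (A : Set S) :
    (π x A).toReal ≤ 1 := by
  have h : π x A ≤ 1 := prob_le_one
  calc (π x A).toReal ≤ (1 : ENNReal).toReal := ENNReal.toReal_mono (by simp) h
    _ = 1 := by simp

lemma contractionSet_bddAbove (π : Kernel S S) [IsMarkovKernel π] :
    BddAbove {r : ℝ | ∃ x₁ x₂ : S, ∃ A : Set S, MeasurableSet A ∧
      r = |(π x₁ A).toReal - (π x₂ A).toReal|} := by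
  refine ⟨1, ?_⟩
  rintro r ⟨x₁, x₂, A, hA, rfl⟩
  have h1 := contraction_toReal_le_one π x₁ A
  have h2 := contraction_toReal_le_one π x₂ A
  have h3 : (0:ℝ) ≤ (π x₁ A).toReal := ENNReal.toReal_nonneg
  have h4 : (0:ℝ) ≤ (π x₂ A).toReal := ENNReal.toReal_nonneg
  rw [abs_sub_le_iff]
  constructor <;> linarith

lemma abs_le_contractionCoeff (π : Kernel S S) [IsMarkovKernel π] (x₁ x₂ : S) (A : Set S)
    (hA : MeasurableSet A) :
    |(π x₁ A).toReal - (π x₂ A).toReal| ≤ contractionCoeff π :=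
  le_csSup (contractionSet_bddAbove π) ⟨x₁, x₂, A, hA, rfl⟩

lemma contractionCoeff_nonneg (π : Kernel S S) [IsMarkovKernel π] (x : S) :
    0 ≤ contractionCoeff π :=
  (abs_nonneg _).trans (abs_le_contractionCoeff π x x ∅ MeasurableSet.empty)

lemma key_bound (π₁ π₂ : Kernel S S) [IsMarkovKernel π₁] [IsMarkovKernel π₂]
    (x₁ x₂ : S) (A : Set S) (hA : MeasurableSet A) :
    |((π₂ ∘ₖ π₁) x₁ A).toReal - ((π₂ ∘ₖ π₁) x₂ A).toReal| ≤
      contractionCoeff π₁ * contractionCoeff π₂ := by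
  haveI : Nonempty S := ⟨x₁⟩
  set δ₁ := contractionCoeff π₁ with hδ₁
  set δ₂ := contractionCoeff π₂ with hδ₂
  have hδ₁0 : 0 ≤ δ₁ := contractionCoeff_nonneg π₁ x₁
  have hδ₂0 : 0 ≤ δ₂ := contractionCoeff_nonneg π₂ x₁
  set f : S → ℝ := fun y => (π₂ y A).toReal with hf
  have f_meas : Measurable f := (π₂.measurable_coe hA).ennreal_toReal
  have f_nn : ∀ y, 0 ≤ f y := fun y => ENNReal.toReal_nonneg
  have f_le1 : ∀ y, f y ≤ 1 := fun y => contraction_toReal_le_one π₂ y A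
  have bddB : BddBelow (Set.range f) := ⟨0, by rintro r ⟨y, rfl⟩; exact f_nn y⟩
  set m : ℝ := ⨅ y, f y with hm
  have hm0 : 0 ≤ m := le_ciInf f_nn
  have hmf : ∀ y, m ≤ f y := fun y => ciInf_le bddB y
  set g : S → ℝ := fun y => f y - m with hg
  have g_meas : Measurable g := f_meas.sub measurable_const
  have g_nn : ∀ y, 0 ≤ g y := fun y => sub_nonneg.mpr (hmf y)
  have g_le : ∀ y, g y ≤ δ₂ := by
    intro y
    have : f y - δ₂ ≤ m := by
      apply le_ciInf
      intro y'
      have := (le_abs_self _).trans (abs_le_contractionCoeff π₂ y y' A hA)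
      linarith
    simpa [hg] using by linarith
  -- integral representation
  have int_eq : ∀ x : S, ((π₂ ∘ₖ π₁) x A).toReal = ∫ y, f y ∂(π₁ x) := by
    intro x
    rw [Kernel.comp_apply' _ _ _ hA,
      ← integral_toReal (π₂.measurable_coe hA).aemeasurable
        (ae_of_all _ fun y => measure_lt_top _ _)]
  have f_int : ∀ x : S, Integrable f (π₁ x) := by
    intro x
    refine Integrable.mono' (integrable_const 1) f_meas.aestronglyMeasurable
      (ae_of_all _ fun y => ?_)
    rw [Real.norm_eq_abs, abs_of_nonneg (f_nn y)]
    exact f_le1 y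
  have g_int : ∀ x : S, Integrable g (π₁ x) := fun x => (f_int x).sub (integrable_const m)
  have int_g : ∀ x : S, ∫ y, g y ∂(π₁ x) = (∫ y, f y ∂(π₁ x)) - m := by
    intro x
    rw [show g = fun y => f y - m from rfl]
    rw [integral_sub (f_int x) (integrable_const m), integral_const]
    simp
  -- layer cake
  set H : S → ℝ → ℝ := fun x t => ((π₁ x) {a | t < g a}).toReal with hH
  have layer : ∀ x : S, ∫ y, g y ∂(π₁ x) = ∫ t in Set.Ioi (0:ℝ), H x t := by
    intro x
    exact (g_int x).integral_eq_integral_meas_lt (ae_of_all _ g_nn)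
  have Bmeas : ∀ t : ℝ, MeasurableSet {a | t < g a} :=
    fun t => measurableSet_lt measurable_const g_meas
  have Hmeas : ∀ x : S, Measurable (H x) := by
    intro x
    have anti : Antitone (fun t : ℝ => (π₁ x) {a | t < g a}) := fun s t hst =>
      measure_mono fun a ha => lt_of_le_of_lt hst ha
    exact anti.measurable.ennreal_toReal
  have Hzero : ∀ x : S, ∀ t ∈ Set.Ioi δ₂, H x t = 0 := by
    intro x t ht
    have : {a | t < g a} = ∅ := by
      ext a
      simp only [Set.mem_setOf_eq, Set.mem_empty_iff_false, iff_false, not_lt]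
      exact (g_le a).trans (le_of_lt ht)
    simp [hH, this]
  have Hbdd : ∀ x : S, ∀ t : ℝ, ‖H x t‖ ≤ 1 := by
    intro x t
    rw [Real.norm_eq_abs, abs_of_nonneg ENNReal.toReal_nonneg]
    exact contraction_toReal_le_one π₁ x _
  have H_intOn_Ioc : ∀ x : S, IntegrableOn (H x) (Set.Ioc 0 δ₂) := by
    intro x
    refine Integrable.mono' ((integrableOn_const_iff (C := (1:ℝ))).mpr (Or.inr ?_))
      (Hmeas x).aestronglyMeasurable (ae_of_all _ fun t => Hbdd x t)
    rw [Real.volume_Ioc]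
    exact ENNReal.ofReal_lt_top
  have H_intOn_Ioi : ∀ x : S, IntegrableOn (H x) (Set.Ioi δ₂) := by
    intro x
    refine (integrableOn_congr_fun (fun t ht => (Hzero x t ht).symm) measurableSet_Ioi).mp ?_
    exact integrableOn_zero
  have split : ∀ x : S, ∫ t in Set.Ioi (0:ℝ), H x t = ∫ t in Set.Ioc 0 δ₂, H x t := by
    intro x
    rw [← Set.Ioc_union_Ioi_eq_Ioi hδ₂0,
      setIntegral_union (Set.Ioc_disjoint_Ioi le_rfl) measurableSet_Ioi
        (H_intOn_Ioc x) (H_intOn_Ioi x),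
      setIntegral_eq_zero_of_forall_eq_zero (Hzero x), add_zero]
  have Hdiff_bound : ∀ t ∈ Set.Ioc 0 δ₂, ‖H x₁ t - H x₂ t‖ ≤ δ₁ := by
    intro t _
    rw [Real.norm_eq_abs]
    exact abs_le_contractionCoeff π₁ x₁ x₂ _ (Bmeas t)
  have main : |(∫ t in Set.Ioc 0 δ₂, H x₁ t) - ∫ t in Set.Ioc 0 δ₂, H x₂ t| ≤ δ₁ * δ₂ := by
    rw [← integral_sub (H_intOn_Ioc x₁) (H_intOn_Ioc x₂)]
    have vol : (volume (Set.Ioc (0:ℝ) δ₂)).toReal = δ₂ := by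
      rw [Real.volume_Ioc, ENNReal.toReal_ofReal (by linarith)]
      ring
    calc |∫ t in Set.Ioc 0 δ₂, (H x₁ t - H x₂ t)|
        ≤ δ₁ * (volume (Set.Ioc (0:ℝ) δ₂)).toReal := by
          refine norm_setIntegral_le_of_norm_le_const ?_ Hdiff_bound
          rw [Real.volume_Ioc]; exact ENNReal.ofReal_lt_top
      _ = δ₁ * δ₂ := by rw [vol]
  calc |((π₂ ∘ₖ π₁) x₁ A).toReal - ((π₂ ∘ₖ π₁) x₂ A).toReal|
      = |(∫ t in Set.Ioc 0 δ₂, H x₁ t) - ∫ t in Set.Ioc 0 δ₂, H x₂ t| := by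
        rw [int_eq x₁, int_eq x₂]
        have e1 : ∫ y, f y ∂(π₁ x₁) = m + ∫ t in Set.Ioc 0 δ₂, H x₁ t := by
          have := int_g x₁
          rw [layer x₁, split x₁] at this
          linarith
        have e2 : ∫ y, f y ∂(π₁ x₂) = m + ∫ t in Set.Ioc 0 δ₂, H x₂ t := by
          have := int_g x₂
          rw [layer x₂, split x₂] at this
          linarith
        rw [e1, e2]
        ring_nf
    _ ≤ δ₁ * δ₂ := main

end Aux

/-- submultiplicativity of the contraction coefficient:
`δ(π₁π₂) ≤ δ(π₁)·δ(π₂)`, where `(π₁π₂)(x,A) = ∫ π₂(y,A) π₁(x,dy)`.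
(Note: in Mathlib's notation the composition `π₁π₂` of the paper is `π₂ ∘ₖ π₁`.) -/
theorem contractionCoeff_comp_le {S : Type*} [MeasurableSpace S]
    (π₁ π₂ : ProbabilityTheory.Kernel S S) [IsMarkovKernel π₁] [IsMarkovKernel π₂] :
    contractionCoeff (π₂ ∘ₖ π₁) ≤ contractionCoeff π₁ * contractionCoeff π₂ := by
  by_cases hS : Nonempty S
  · obtain ⟨x⟩ := hS
    refine Real.sSup_le ?_ (mul_nonneg (contractionCoeff_nonneg π₁ x)
      (contractionCoeff_nonneg π₂ x))
    rintro r ⟨x₁, x₂, A, hA, rfl⟩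
    exact key_bound π₁ π₂ x₁ x₂ A hA
  · have h : ∀ (π : Kernel S S), contractionCoeff π = 0 := by
      intro π
      unfold contractionCoeff
      convert Real.sSup_empty
      ext r
      simp only [Set.mem_setOf_eq, Set.mem_empty_iff_false, iff_false]
      rintro ⟨x₁, -⟩
      exact hS ⟨x₁⟩
    simp [h]
end

section
/- (LLN for triangular arrays with small oscillation of conditional tails) For each n, let Y₁⁽ⁿ⁾,…,Y_n⁽ⁿ⁾ be non-negative random variables and F_l⁽ⁿ⁾ nested σ-fields with σ(Y₁⁽ⁿ⁾,…,Y_l⁽ⁿ⁾) ⊆ F_l⁽ⁿ⁾. Suppose (i) E[Σ_{l=1}^n Y_l⁽ⁿ⁾] → 1, (ii) max_l ‖Y_l⁽ⁿ⁾‖_∞ ≤ ε_n with ε_n → 0, and (iii) sup_{1≤l≤n−1} Osc(E[Σ_{j=l+1}^n Y_j⁽ⁿ⁾ | F_l⁽ⁿ⁾]) → 0, where Osc denotes the (essential) supremum minus infimum over sample points. Then Σ_{l=1}^n Y_l⁽ⁿ⁾ → 1 in L². -/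
open MeasureTheory ProbabilityTheory Filter

lemma sq_sum_Icc (a : ℕ → ℝ) : ∀ n : ℕ, (∑ l ∈ Finset.Icc 1 n, a l)^2 =
    ∑ l ∈ Finset.Icc 1 n, (a l)^2
      + 2 * ∑ l ∈ Finset.Icc 1 n, a l * ∑ j ∈ Finset.Icc (l+1) n, a j := by
  intro n
  induction n with
  | zero => simp
  | succ n ih =>
    rw [Finset.sum_Icc_succ_top (by omega : 1 ≤ n + 1),
        Finset.sum_Icc_succ_top (by omega : 1 ≤ n + 1),
        Finset.sum_Icc_succ_top (by omega : 1 ≤ n + 1)]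
    have h1 : ∀ l ∈ Finset.Icc 1 n, a l * ∑ j ∈ Finset.Icc (l+1) (n+1), a j
        = a l * ∑ j ∈ Finset.Icc (l+1) n, a j + a l * a (n+1) := by
      intro l hl
      simp only [Finset.mem_Icc] at hl
      rw [Finset.sum_Icc_succ_top (by omega : l + 1 ≤ n + 1), mul_add]
    rw [Finset.sum_congr rfl h1, Finset.sum_add_distrib, ← Finset.sum_mul]
    have h2 : Finset.Icc (n+1+1) (n+1) = ∅ := by
      apply Finset.Icc_eq_empty; omega
    rw [h2]
    simp only [Finset.sum_empty, mul_zero, add_zero]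
    linear_combination ih

lemma condexp_ae_close {Ω : Type*} [m0 : MeasurableSpace Ω] (P : Measure Ω)
    [IsProbabilityMeasure P] {m : MeasurableSpace Ω} (hm : m ≤ m0) {f : Ω → ℝ}
    (hf : Integrable f P) {δ C : ℝ}
    (hosc : essSup (fun ω => (P[f|m]) ω) P - essInf (fun ω => (P[f|m]) ω) P ≤ δ)
    (h0 : ∀ ω, 0 ≤ f ω) (hC : ∀ ω, f ω ≤ C) :
    ∀ᵐ ω ∂P, |(P[f|m]) ω - ∫ x, f x ∂P| ≤ δ := by
  set g : Ω → ℝ := P[f|m] with hg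
  have hg0 : 0 ≤ᵐ[P] g := condExp_nonneg (ae_of_all _ h0)
  have hgC : ∀ᵐ ω ∂P, g ω ≤ C := by
    have h := condExp_mono (m := m) hf (integrable_const C)
      (ae_of_all _ fun ω => hC ω)
    rw [condExp_const hm] at h
    exact h
  have hbdd_above : IsBoundedUnder (· ≤ ·) (ae P) g := ⟨C, eventually_map.2 hgC⟩
  have hbdd_below : IsBoundedUnder (· ≥ ·) (ae P) g :=
    ⟨0, eventually_map.2 (hg0.mono fun ω h => h)⟩
  have hsup : ∀ᵐ ω ∂P, g ω ≤ essSup g P := ae_le_essSup hbdd_above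
  have hinf : ∀ᵐ ω ∂P, essInf g P ≤ g ω := ae_essInf_le hbdd_below
  have hgint : Integrable g P := integrable_condExp
  have hIg : ∫ x, g x ∂P = ∫ x, f x ∂P := integral_condExp hm
  have hmean_le : ∫ x, f x ∂P ≤ essSup g P := by
    rw [← hIg]
    have := integral_mono_ae hgint (integrable_const (essSup g P)) hsup
    simpa using this
  have hle_mean : essInf g P ≤ ∫ x, f x ∂P := by
    rw [← hIg]
    have := integral_mono_ae (integrable_const (essInf g P)) hgint hinf
    simpa using this
  filter_upwards [hsup, hinf] with ω h1 h2
  have hosc' : essSup g P - essInf g P ≤ δ := hosc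
  rw [abs_le]
  constructor <;> linarith

/-- LLN for triangular arrays of non-negative bounded variables whose
conditional tail expectations have uniformly small oscillation:
`Σ_{l=1}^n Y_l⁽ⁿ⁾ → 1` in `L²`. -/
theorem triangular_array_LLN {Ω : Type*} [MeasurableSpace Ω]
    (P : Measure Ω) [IsProbabilityMeasure P]
    (Y : ℕ → ℕ → Ω → ℝ) (hYmeas : ∀ n l, Measurable (Y n l))
    (hYpos : ∀ n l ω, 0 ≤ Y n l ω)
    (F : ℕ → ℕ → MeasurableSpace Ω)
    (hFle : ∀ n l, F n l ≤ ‹MeasurableSpace Ω›)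
    (hFmono : ∀ n l, F n l ≤ F n (l + 1))
    (hFgen : ∀ n l j, j ≤ l → MeasurableSpace.comap (Y n j) inferInstance ≤ F n l)
    (hmean : Tendsto (fun n => ∫ ω, ∑ l ∈ Finset.Icc 1 n, Y n l ω ∂P) atTop (nhds 1))
    (ε : ℕ → ℝ) (hε : Tendsto ε atTop (nhds 0))
    (hYbdd : ∀ n l ω, Y n l ω ≤ ε n)
    (hosc : ∀ δ : ℝ, 0 < δ → ∃ N : ℕ, ∀ n ≥ N, ∀ l, 1 ≤ l → l ≤ n - 1 →
      essSup (fun ω => (P[fun ω => ∑ j ∈ Finset.Icc (l + 1) n, Y n j ω | F n l]) ω) P -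
        essInf (fun ω => (P[fun ω => ∑ j ∈ Finset.Icc (l + 1) n, Y n j ω | F n l]) ω) P
          ≤ δ) :
    Tendsto (fun n => ∫ ω, (∑ l ∈ Finset.Icc 1 n, Y n l ω - 1) ^ 2 ∂P)
      atTop (nhds 0) := by
  -- Nonempty Ω
  have hne : Nonempty Ω := by
    by_contra h
    rw [not_nonempty_iff] at h
    have h1 : P Set.univ = 1 := measure_univ
    rw [Set.univ_eq_empty_iff.mpr h, measure_empty] at h1
    exact zero_ne_one h1
  obtain ⟨ω₀⟩ := hne
  have hεnn : ∀ n, 0 ≤ ε n := fun n => (hYpos n 1 ω₀).trans (hYbdd n 1 ω₀)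
  -- integrability of each Y n l
  have hYint : ∀ n l, Integrable (Y n l) P := by
    intro n l
    refine (integrable_const (ε n)).mono' (hYmeas n l).aestronglyMeasurable ?_
    filter_upwards with ω
    rw [Real.norm_eq_abs, abs_of_nonneg (hYpos n l ω)]
    exact hYbdd n l ω
  -- abbreviations as functions (just notation below)
  have hml_nonneg : ∀ n l, (0:ℝ) ≤ ∫ ω, Y n l ω ∂P :=
    fun n l => integral_nonneg (hYpos n l)
  have hml_le : ∀ n l, (∫ ω, Y n l ω ∂P) ≤ ε n := by
    intro n l
    have := integral_mono (hYint n l) (integrable_const (ε n))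
      (fun ω => hYbdd n l ω)
    simpa using this
  -- tail sums
  have hTmeas : ∀ n l, Measurable (fun ω => ∑ j ∈ Finset.Icc (l+1) n, Y n j ω) :=
    fun n l => Finset.measurable_sum _ (fun j _ => hYmeas n j)
  have hTint : ∀ n l, Integrable (fun ω => ∑ j ∈ Finset.Icc (l+1) n, Y n j ω) P :=
    fun n l => integrable_finset_sum _ (fun j _ => hYint n j)
  have hTnonneg : ∀ n l ω, (0:ℝ) ≤ ∑ j ∈ Finset.Icc (l+1) n, Y n j ω :=
    fun n l ω => Finset.sum_nonneg (fun j _ => hYpos n j ω)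
  have hTbd : ∀ n l ω, (∑ j ∈ Finset.Icc (l+1) n, Y n j ω) ≤ (n:ℝ) * ε n := by
    intro n l ω
    calc (∑ j ∈ Finset.Icc (l+1) n, Y n j ω)
        ≤ ∑ j ∈ Finset.Icc (l+1) n, ε n :=
          Finset.sum_le_sum (fun j _ => hYbdd n j ω)
      _ = ((Finset.Icc (l+1) n).card : ℝ) * ε n := by
          rw [Finset.sum_const, nsmul_eq_mul]
      _ ≤ (n:ℝ) * ε n := by
          apply mul_le_mul_of_nonneg_right _ (hεnn n)
          exact_mod_cast by
            rw [Nat.card_Icc]; omega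
  -- products integrable
  have hYTint : ∀ n l, Integrable
      (fun ω => Y n l ω * ∑ j ∈ Finset.Icc (l+1) n, Y n j ω) P := by
    intro n l
    refine (hTint n l).bdd_mul (c := ε n) (hYmeas n l).aestronglyMeasurable (ae_of_all _ fun ω => ?_)
    rw [Real.norm_eq_abs, abs_of_nonneg (hYpos n l ω)]
    exact hYbdd n l ω
  have hY2int : ∀ n l, Integrable (fun ω => (Y n l ω)^2) P := by
    intro n l
    refine (integrable_const ((ε n)^2)).mono'
      ((hYmeas n l).pow_const 2).aestronglyMeasurable ?_
    filter_upwards with ω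
    rw [Real.norm_eq_abs, abs_of_nonneg (sq_nonneg _)]
    exact pow_le_pow_left₀ (hYpos n l ω) (hYbdd n l ω) 2
  -- mean of sum decomposes
  have hμ : ∀ n, (∫ ω, ∑ l ∈ Finset.Icc 1 n, Y n l ω ∂P)
      = ∑ l ∈ Finset.Icc 1 n, ∫ ω, Y n l ω ∂P :=
    fun n => integral_finset_sum _ (fun l _ => hYint n l)
  have hμnn : ∀ n, (0:ℝ) ≤ ∫ ω, ∑ l ∈ Finset.Icc 1 n, Y n l ω ∂P :=
    fun n => integral_nonneg (fun ω => hTnonneg n 0 ω)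
  -- key estimate
  have key : ∀ δ : ℝ, 0 < δ → ∃ N : ℕ, ∀ n ≥ N,
      |(∫ ω, (∑ l ∈ Finset.Icc 1 n, Y n l ω)^2 ∂P)
        - (∫ ω, ∑ l ∈ Finset.Icc 1 n, Y n l ω ∂P)^2|
        ≤ 2 * (ε n + δ) * (∫ ω, ∑ l ∈ Finset.Icc 1 n, Y n l ω ∂P) := by
    intro δ hδ
    obtain ⟨N, hN⟩ := hosc δ hδ
    refine ⟨N, fun n hn => ?_⟩
    -- per-l estimate for the cross terms
    have hcross : ∀ l ∈ Finset.Icc 1 n,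
        |(∫ ω, Y n l ω * ∑ j ∈ Finset.Icc (l+1) n, Y n j ω ∂P)
          - (∫ ω, Y n l ω ∂P) * (∫ ω, ∑ j ∈ Finset.Icc (l+1) n, Y n j ω ∂P)|
          ≤ δ * ∫ ω, Y n l ω ∂P := by
      intro l hl
      simp only [Finset.mem_Icc] at hl
      by_cases hln : l = n
      · subst hln
        have hemp : Finset.Icc (l+1) l = ∅ := by apply Finset.Icc_eq_empty; omega
        simp only [hemp, Finset.sum_empty, mul_zero, integral_zero, zero_sub, abs_neg,
          abs_zero, sub_zero]
        exact mul_nonneg hδ.le (hml_nonneg l l)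
      · have hln' : l ≤ n - 1 := by omega
        have hoscl := hN n hn l hl.1 hln'
        set g : Ω → ℝ := P[fun ω => ∑ j ∈ Finset.Icc (l+1) n, Y n j ω | F n l] with hgdef
        have hclose : ∀ᵐ ω ∂P,
            |g ω - ∫ x, ∑ j ∈ Finset.Icc (l+1) n, Y n j x ∂P| ≤ δ :=
          condexp_ae_close P (hFle n l) (hTint n l) hoscl (hTnonneg n l) (hTbd n l)
        have hYlmeas : Measurable[F n l] (Y n l) :=
          measurable_iff_comap_le.mpr (hFgen n l l le_rfl)
        have hYlsm : StronglyMeasurable[F n l] (Y n l) := hYlmeas.stronglyMeasurable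
        have hpull := condExp_mul_of_stronglyMeasurable_left (μ := P) hYlsm
          (show Integrable (Y n l * fun ω => ∑ j ∈ Finset.Icc (l+1) n, Y n j ω) P from
            hYTint n l) (hTint n l)
        have heq : (∫ ω, Y n l ω * ∑ j ∈ Finset.Icc (l+1) n, Y n j ω ∂P)
            = ∫ ω, Y n l ω * g ω ∂P := by
          have h1 : (∫ ω, (P[Y n l * fun ω => ∑ j ∈ Finset.Icc (l+1) n, Y n j ω|F n l]) ω ∂P)
              = ∫ ω, Y n l ω * ∑ j ∈ Finset.Icc (l+1) n, Y n j ω ∂P :=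
            integral_condExp (hFle n l)
          have h2 : (∫ ω, (P[Y n l * fun ω => ∑ j ∈ Finset.Icc (l+1) n, Y n j ω|F n l]) ω ∂P)
              = ∫ ω, Y n l ω * g ω ∂P := integral_congr_ae hpull
          rw [← h1, h2]
        rw [heq]
        set c : ℝ := ∫ x, ∑ j ∈ Finset.Icc (l+1) n, Y n j x ∂P with hcdef
        have hYgint : Integrable (fun ω => Y n l ω * g ω) P := by
          refine integrable_condExp.bdd_mul (c := ε n) (hYmeas n l).aestronglyMeasurable (ae_of_all _ fun ω => ?_)
          rw [Real.norm_eq_abs, abs_of_nonneg (hYpos n l ω)]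
          exact hYbdd n l ω
        have hexp : (fun ω => Y n l ω * (g ω - c))
            = fun ω => Y n l ω * g ω - c * Y n l ω := funext fun ω => by ring
        have hint3 : Integrable (fun ω => Y n l ω * (g ω - c)) P := by
          rw [hexp]; exact hYgint.sub ((hYint n l).const_mul c)
        have hdiff : (∫ ω, Y n l ω * g ω ∂P) - (∫ ω, Y n l ω ∂P) * c
            = ∫ ω, Y n l ω * (g ω - c) ∂P := by
          rw [hexp, integral_sub hYgint ((hYint n l).const_mul c), integral_const_mul]
          ring
        rw [hdiff]
        have habs : |∫ ω, Y n l ω * (g ω - c) ∂P| ≤ ∫ ω, |Y n l ω * (g ω - c)| ∂P := by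
          simpa only [Real.norm_eq_abs] using
            norm_integral_le_integral_norm (μ := P) (fun ω => Y n l ω * (g ω - c))
        refine habs.trans ?_
        have hmono : (∫ ω, |Y n l ω * (g ω - c)| ∂P) ≤ ∫ ω, δ * Y n l ω ∂P := by
          refine integral_mono_ae hint3.abs ((hYint n l).const_mul δ) ?_
          filter_upwards [hclose] with ω hb
          rw [abs_mul, abs_of_nonneg (hYpos n l ω), mul_comm δ]
          exact mul_le_mul_of_nonneg_left hb (hYpos n l ω)
        calc (∫ ω, |Y n l ω * (g ω - c)| ∂P) ≤ ∫ ω, δ * Y n l ω ∂P := hmono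
          _ = δ * ∫ ω, Y n l ω ∂P := integral_const_mul δ _
    -- expansion of second moment
    have hTl : ∀ l, (∫ ω, ∑ j ∈ Finset.Icc (l+1) n, Y n j ω ∂P)
        = ∑ j ∈ Finset.Icc (l+1) n, ∫ ω, Y n j ω ∂P :=
      fun l => integral_finset_sum _ (fun j _ => hYint n j)
    have hQn : (∫ ω, (∑ l ∈ Finset.Icc 1 n, Y n l ω)^2 ∂P)
        = ∑ l ∈ Finset.Icc 1 n, (∫ ω, (Y n l ω)^2 ∂P)
          + 2 * ∑ l ∈ Finset.Icc 1 n,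
              ∫ ω, Y n l ω * ∑ j ∈ Finset.Icc (l+1) n, Y n j ω ∂P := by
      have hpt : ∀ ω, (∑ l ∈ Finset.Icc 1 n, Y n l ω)^2
          = ∑ l ∈ Finset.Icc 1 n, (Y n l ω)^2
            + 2 * ∑ l ∈ Finset.Icc 1 n, Y n l ω * ∑ j ∈ Finset.Icc (l+1) n, Y n j ω :=
        fun ω => sq_sum_Icc (fun l => Y n l ω) n
      simp only [hpt]
      have hA : Integrable (fun ω => ∑ l ∈ Finset.Icc 1 n, (Y n l ω)^2) P :=
        integrable_finset_sum _ (fun l _ => hY2int n l)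
      have hB : Integrable (fun ω => ∑ l ∈ Finset.Icc 1 n,
          Y n l ω * ∑ j ∈ Finset.Icc (l+1) n, Y n j ω) P :=
        integrable_finset_sum _ (fun l _ => hYTint n l)
      rw [integral_add hA (hB.const_mul 2), integral_const_mul,
          integral_finset_sum _ (fun l _ => hY2int n l),
          integral_finset_sum _ (fun l _ => hYTint n l)]
    have hμ2 : (∫ ω, ∑ l ∈ Finset.Icc 1 n, Y n l ω ∂P)^2
        = ∑ l ∈ Finset.Icc 1 n, (∫ ω, Y n l ω ∂P)^2
          + 2 * ∑ l ∈ Finset.Icc 1 n, (∫ ω, Y n l ω ∂P)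
              * (∫ ω, ∑ j ∈ Finset.Icc (l+1) n, Y n j ω ∂P) := by
      rw [hμ n, sq_sum_Icc (fun l => ∫ ω, Y n l ω ∂P) n]
      simp only [hTl]
    have hdec : (∫ ω, (∑ l ∈ Finset.Icc 1 n, Y n l ω)^2 ∂P)
        - (∫ ω, ∑ l ∈ Finset.Icc 1 n, Y n l ω ∂P)^2
        = ∑ l ∈ Finset.Icc 1 n,
            ((∫ ω, (Y n l ω)^2 ∂P) - (∫ ω, Y n l ω ∂P)^2
              + 2 * ((∫ ω, Y n l ω * ∑ j ∈ Finset.Icc (l+1) n, Y n j ω ∂P)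
                - (∫ ω, Y n l ω ∂P) * (∫ ω, ∑ j ∈ Finset.Icc (l+1) n, Y n j ω ∂P))) := by
      rw [hQn, hμ2, Finset.sum_add_distrib, Finset.sum_sub_distrib, ← Finset.mul_sum,
        Finset.sum_sub_distrib]
      ring
    rw [hdec, hμ n]
    calc |∑ l ∈ Finset.Icc 1 n,
            ((∫ ω, (Y n l ω)^2 ∂P) - (∫ ω, Y n l ω ∂P)^2
              + 2 * ((∫ ω, Y n l ω * ∑ j ∈ Finset.Icc (l+1) n, Y n j ω ∂P)
                - (∫ ω, Y n l ω ∂P) * (∫ ω, ∑ j ∈ Finset.Icc (l+1) n, Y n j ω ∂P)))|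
        ≤ ∑ l ∈ Finset.Icc 1 n,
            |(∫ ω, (Y n l ω)^2 ∂P) - (∫ ω, Y n l ω ∂P)^2
              + 2 * ((∫ ω, Y n l ω * ∑ j ∈ Finset.Icc (l+1) n, Y n j ω ∂P)
                - (∫ ω, Y n l ω ∂P) * (∫ ω, ∑ j ∈ Finset.Icc (l+1) n, Y n j ω ∂P))| :=
          Finset.abs_sum_le_sum_abs _ _
      _ ≤ ∑ l ∈ Finset.Icc 1 n, 2 * (ε n + δ) * (∫ ω, Y n l ω ∂P) := by
          refine Finset.sum_le_sum (fun l hl => ?_)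
          have h1 : (0:ℝ) ≤ ∫ ω, Y n l ω ∂P := hml_nonneg n l
          have h2 : (∫ ω, Y n l ω ∂P) ≤ ε n := hml_le n l
          have h3 : (∫ ω, (Y n l ω)^2 ∂P) ≤ ε n * ∫ ω, Y n l ω ∂P := by
            have := integral_mono (hY2int n l) ((hYint n l).const_mul (ε n))
              (fun ω => by nlinarith [hYpos n l ω, hYbdd n l ω])
            rwa [integral_const_mul] at this
          have h4 : (0:ℝ) ≤ ∫ ω, (Y n l ω)^2 ∂P := integral_nonneg fun ω => sq_nonneg _
          have h5 : (∫ ω, Y n l ω ∂P)^2 ≤ ε n * ∫ ω, Y n l ω ∂P := by nlinarith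
          have h6 := hcross l hl
          have h7 : (0:ℝ) ≤ (∫ ω, Y n l ω ∂P)^2 := sq_nonneg _
          have habs1 : |(∫ ω, (Y n l ω)^2 ∂P) - (∫ ω, Y n l ω ∂P)^2|
              ≤ ε n * ∫ ω, Y n l ω ∂P := abs_le.mpr ⟨by linarith, by linarith⟩
          calc |(∫ ω, (Y n l ω)^2 ∂P) - (∫ ω, Y n l ω ∂P)^2
              + 2 * ((∫ ω, Y n l ω * ∑ j ∈ Finset.Icc (l+1) n, Y n j ω ∂P)
                - (∫ ω, Y n l ω ∂P) * (∫ ω, ∑ j ∈ Finset.Icc (l+1) n, Y n j ω ∂P))|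
              ≤ |(∫ ω, (Y n l ω)^2 ∂P) - (∫ ω, Y n l ω ∂P)^2|
                + |2 * ((∫ ω, Y n l ω * ∑ j ∈ Finset.Icc (l+1) n, Y n j ω ∂P)
                  - (∫ ω, Y n l ω ∂P) * (∫ ω, ∑ j ∈ Finset.Icc (l+1) n, Y n j ω ∂P))| :=
                abs_add_le _ _
            _ ≤ ε n * (∫ ω, Y n l ω ∂P) + 2 * (δ * ∫ ω, Y n l ω ∂P) := by
                refine add_le_add habs1 ?_
                rw [abs_mul]
                simp only [abs_two]
                exact mul_le_mul_of_nonneg_left h6 (by norm_num)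
            _ ≤ 2 * (ε n + δ) * (∫ ω, Y n l ω ∂P) := by
                nlinarith [mul_nonneg (hεnn n) h1]
      _ = 2 * (ε n + δ) * ∑ l ∈ Finset.Icc 1 n, (∫ ω, Y n l ω ∂P) := by
          rw [Finset.mul_sum]
  -- second moment tends to 1
  have hQ : Tendsto (fun n => ∫ ω, (∑ l ∈ Finset.Icc 1 n, Y n l ω)^2 ∂P)
      atTop (nhds 1) := by
    have hdiff : Tendsto (fun n => (∫ ω, (∑ l ∈ Finset.Icc 1 n, Y n l ω)^2 ∂P)
        - (∫ ω, ∑ l ∈ Finset.Icc 1 n, Y n l ω ∂P)^2) atTop (nhds 0) := by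
      rw [Metric.tendsto_atTop]
      intro e he
      obtain ⟨N1, hN1⟩ := key (e/16) (by linarith)
      obtain ⟨N2, hN2⟩ := Metric.tendsto_atTop.mp hmean 1 one_pos
      obtain ⟨N3, hN3⟩ := Metric.tendsto_atTop.mp hε (e/16) (by linarith)
      refine ⟨max N1 (max N2 N3), fun n hn => ?_⟩
      have h1 := hN1 n (le_trans (le_max_left _ _) hn)
      have h2 := hN2 n (le_trans (le_trans (le_max_left _ _) (le_max_right _ _)) hn)
      have h3 := hN3 n (le_trans (le_trans (le_max_right _ _) (le_max_right _ _)) hn)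
      rw [Real.dist_eq] at h2
      rw [Real.dist_eq, sub_zero] at h3
      rw [Real.dist_eq, sub_zero]
      have hμle : (∫ ω, ∑ l ∈ Finset.Icc 1 n, Y n l ω ∂P) ≤ 2 := by
        have := abs_lt.mp h2; linarith [this.2]
      have hε3 : ε n ≤ e/16 := by
        have := abs_lt.mp h3; linarith [this.2]
      have hmm : (ε n + e/16) * (∫ ω, ∑ l ∈ Finset.Icc 1 n, Y n l ω ∂P) ≤ (e/8) * 2 :=
        mul_le_mul (by linarith) hμle (hμnn n) (by linarith)
      have hexp : 2 * (ε n + e/16) * (∫ ω, ∑ l ∈ Finset.Icc 1 n, Y n l ω ∂P)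
          = 2 * ((ε n + e/16) * (∫ ω, ∑ l ∈ Finset.Icc 1 n, Y n l ω ∂P)) := by ring
      calc |(∫ ω, (∑ l ∈ Finset.Icc 1 n, Y n l ω)^2 ∂P)
            - (∫ ω, ∑ l ∈ Finset.Icc 1 n, Y n l ω ∂P)^2|
          ≤ 2 * (ε n + e/16) * (∫ ω, ∑ l ∈ Finset.Icc 1 n, Y n l ω ∂P) := h1
        _ ≤ e/2 := by rw [hexp]; linarith
        _ < e := by linarith
    have hμ2t : Tendsto (fun n => (∫ ω, ∑ l ∈ Finset.Icc 1 n, Y n l ω ∂P)^2)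
        atTop (nhds 1) := by
      have := hmean.mul hmean
      norm_num at this
      simpa [pow_two] using this
    have := hdiff.add hμ2t
    norm_num at this
    simpa using this
  -- conclusion
  have hS2int : ∀ n, Integrable (fun ω => (∑ l ∈ Finset.Icc 1 n, Y n l ω)^2) P := by
    intro n
    refine (integrable_const (((n:ℝ) * ε n)^2)).mono'
      ((hTmeas n 0).pow_const 2).aestronglyMeasurable ?_
    filter_upwards with ω
    rw [Real.norm_eq_abs, abs_of_nonneg (sq_nonneg _)]
    exact pow_le_pow_left₀ (hTnonneg n 0 ω) (hTbd n 0 ω) 2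
  have hrw : ∀ n, (∫ ω, (∑ l ∈ Finset.Icc 1 n, Y n l ω - 1)^2 ∂P)
      = (∫ ω, (∑ l ∈ Finset.Icc 1 n, Y n l ω)^2 ∂P)
        - 2 * (∫ ω, ∑ l ∈ Finset.Icc 1 n, Y n l ω ∂P) + 1 := by
    intro n
    have hpt : ∀ ω, (∑ l ∈ Finset.Icc 1 n, Y n l ω - 1)^2
        = (∑ l ∈ Finset.Icc 1 n, Y n l ω)^2
          - 2 * (∑ l ∈ Finset.Icc 1 n, Y n l ω) + 1 := fun ω => by ring
    simp only [hpt]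
    have hSint : Integrable (fun ω => ∑ l ∈ Finset.Icc 1 n, Y n l ω) P :=
      integrable_finset_sum _ (fun l _ => hYint n l)
    have h2 : Integrable (fun ω => 2 * ∑ l ∈ Finset.Icc 1 n, Y n l ω) P :=
      hSint.const_mul 2
    have h1 : Integrable (fun ω => (∑ l ∈ Finset.Icc 1 n, Y n l ω)^2
        - 2 * ∑ l ∈ Finset.Icc 1 n, Y n l ω) P := (hS2int n).sub h2
    rw [integral_add h1 (integrable_const 1),
        integral_sub (hS2int n) h2,
        integral_const, integral_const_mul]
    simp
  simp only [hrw]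
  have hfin := (hQ.sub (hmean.const_mul 2)).add tendsto_const_nhds (b := (1:ℝ))
  convert hfin using 2
  norm_num
end
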